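/- Let ρ > 0 and define V : M₃(ℝ) → ℝ by V(J) = ½∥J∥² − ρ ln Z(J). Then V is differentiable on M₃(ℝ), and for every J, H ∈ M₃(ℝ) its derivative satisfies DV(J)(H) = (J − ρ 𝒥[M_J]) · H; i.e. the gradient of V with respect to the inner product A·B = ½Tr(ABᵀ) is ∇V(J) = J − ρ 𝒥[M_J]. -/

import Mathlib

open Matrix MeasureTheory

set_option synthInstance.maxHeartbeats 1000000
set_option maxHeartbeats 1000000


/-- The space of `3 × 3` real matrices. -/
abbrev Mat3 := Matrix (Fin 3) (Fin 3) ℝ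

instance : MeasurableSpace Mat3 := inferInstanceAs (MeasurableSpace (Fin 3 → Fin 3 → ℝ))

attribute [local instance] Matrix.normedAddCommGroup Matrix.normedSpace

/-- `SO₃(ℝ)`: real `3 × 3` matrices with `AᵀA = I₃` and `det A = 1`. -/
def SO3 : Set Mat3 := {A | Aᵀ * A = 1 ∧ A.det = 1}

/-- The inner product `A·B = ½ Tr(ABᵀ)` on `M₃(ℝ)`. -/
noncomputable def mdot (A B : Mat3) : ℝ := (1 / 2) * (A * Bᵀ).trace

/-- `μ` is the Haar probability measure of `SO₃(ℝ)`, viewed as a measure on `M₃(ℝ)`. -/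
def IsHaarSO3 (μ : Measure Mat3) : Prop :=
  IsProbabilityMeasure μ ∧ μ SO3ᶜ = 0 ∧
    ∀ P ∈ SO3, Measure.map (fun A => P * A) μ = μ

/-- The normalization constant `Z(J) = ∫ exp(J·A) dμ(A)`. -/
noncomputable def Z (μ : Measure Mat3) (J : Mat3) : ℝ := ∫ A, Real.exp (mdot J A) ∂μ

/-- The generalized von Mises density `M_J(A) = exp(J·A)/Z(J)`. -/
noncomputable def vonMises (μ : Measure Mat3) (J : Mat3) (A : Mat3) : ℝ :=
  Real.exp (mdot J A) / Z μ J

/-- The first moment `𝒥[f] = ∫ A f(A) dμ(A)`, taken entrywise. -/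
noncomputable def Jcal (μ : Measure Mat3) (f : Mat3 → ℝ) : Mat3 :=
  Matrix.of fun i j => ∫ A, f A * A i j ∂μ

/-- The potential `V(J) = ½∥J∥² − ρ ln Z(J)`. -/
noncomputable def V (μ : Measure Mat3) (ρ : ℝ) (J : Mat3) : ℝ :=
  (1 / 2) * mdot J J - ρ * Real.log (Z μ J)

@[reducible] def piTopMat3 : TopologicalSpace Mat3 := Pi.topologicalSpace

section

attribute [local instance] piTopMat3

instance : OpensMeasurableSpace Mat3 :=
  inferInstanceAs (OpensMeasurableSpace (Fin 3 → Fin 3 → ℝ))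

-- basic lemmas about mdot
lemma mdot_eq_sum (A B : Mat3) :
    mdot A B = (1 / 2) * ∑ i, ∑ j, A i j * B i j := by
  simp [mdot, Matrix.trace, Matrix.diag, Matrix.mul_apply]

lemma mdot_comm (A B : Mat3) : mdot A B = mdot B A := by
  simp only [mdot_eq_sum]
  simp [mul_comm]

lemma mdot_add_left (A B C : Mat3) : mdot (A + B) C = mdot A C + mdot B C := by
  simp [mdot_eq_sum, Matrix.add_apply, add_mul, Finset.sum_add_distrib, mul_add]

lemma mdot_smul_left (c : ℝ) (A C : Mat3) : mdot (c • A) C = c * mdot A C := by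
  simp [mdot_eq_sum, Matrix.smul_apply, smul_eq_mul, mul_assoc, Finset.mul_sum]
  ring_nf

lemma mdot_sub_left (A B C : Mat3) : mdot (A - B) C = mdot A C - mdot B C := by
  simp [mdot_eq_sum, Matrix.sub_apply, sub_mul, Finset.sum_sub_distrib, mul_sub]

lemma mdot_add_right (A B C : Mat3) : mdot A (B + C) = mdot A B + mdot A C := by
  rw [mdot_comm, mdot_add_left, mdot_comm B, mdot_comm C]

lemma mdot_smul_right (c : ℝ) (A C : Mat3) : mdot A (c • C) = c * mdot A C := by
  rw [mdot_comm, mdot_smul_left, mdot_comm]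

/-- `mdot` is bounded: `|A·B| ≤ (9/2)‖A‖‖B‖` for the sup norm. -/
lemma abs_mdot_le (A B : Mat3) : |mdot A B| ≤ (9 / 2) * (‖A‖ * ‖B‖) := by
  rw [mdot_eq_sum]
  have h : |∑ i, ∑ j, A i j * B i j| ≤ 9 * (‖A‖ * ‖B‖) := by
    calc |∑ i, ∑ j, A i j * B i j| ≤ ∑ i, |∑ j : Fin 3, A i j * B i j| :=
          Finset.abs_sum_le_sum_abs _ _
      _ ≤ ∑ i : Fin 3, ∑ j : Fin 3, |A i j * B i j| := by
          exact Finset.sum_le_sum fun i _ => Finset.abs_sum_le_sum_abs _ _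
      _ ≤ ∑ _i : Fin 3, ∑ _j : Fin 3, ‖A‖ * ‖B‖ := by
          refine Finset.sum_le_sum fun i _ => Finset.sum_le_sum fun j _ => ?_
          rw [abs_mul]
          exact mul_le_mul (A.norm_entry_le_entrywise_sup_norm)
            (B.norm_entry_le_entrywise_sup_norm) (abs_nonneg _) (norm_nonneg _)
      _ = 9 * (‖A‖ * ‖B‖) := by simp; ring
  rw [abs_mul]
  calc |(1:ℝ)/2| * |∑ i, ∑ j, A i j * B i j| ≤ (1/2) * (9 * (‖A‖ * ‖B‖)) := by
        rw [abs_of_nonneg (by norm_num : (0:ℝ) ≤ 1/2)]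
        exact mul_le_mul_of_nonneg_left h (by norm_num)
    _ = (9/2) * (‖A‖ * ‖B‖) := by ring

/-- Matrices in `SO3` have sup norm at most 1. -/
lemma SO3_norm_le_one {A : Mat3} (hA : A ∈ SO3) : ‖A‖ ≤ 1 := by
  rw [Matrix.norm_le_iff (by norm_num : (0:ℝ) ≤ 1)]
  intro i j
  have h1 : (Aᵀ * A) j j = 1 := by rw [hA.1]; simp
  have h2 : ∑ k, A k j ^ 2 = 1 := by
    rw [← h1, Matrix.mul_apply]
    simp [Matrix.transpose_apply, sq]
  have h3 : A i j ^ 2 ≤ 1 := by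
    rw [← h2]
    exact Finset.single_le_sum (fun k _ => sq_nonneg (A k j)) (Finset.mem_univ i)
  rw [Real.norm_eq_abs]
  exact (sq_le_one_iff_abs_le_one _).mp h3

/-- The continuous linear map `H ↦ mdot K H`, linearly in `K`. -/
noncomputable def mdotCLM : Mat3 →ₗ[ℝ] (Mat3 →L[ℝ] ℝ) where
  toFun K := LinearMap.toContinuousLinearMap
    { toFun := fun H => mdot K H
      map_add' := fun H₁ H₂ => mdot_add_right K H₁ H₂
      map_smul' := fun c H => mdot_smul_right c K H }
  map_add' K₁ K₂ := by ext H; simp [mdot_add_left]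
  map_smul' c K := by ext H; simp [mdot_smul_left]

@[simp] lemma mdotCLM_apply (K H : Mat3) : mdotCLM K H = mdot K H := rfl

lemma mdotCLM_norm_le (K : Mat3) : ‖mdotCLM K‖ ≤ (9/2) * ‖K‖ := by
  refine ContinuousLinearMap.opNorm_le_bound _ (by positivity) fun H => ?_
  have := abs_mdot_le K H
  simpa [Real.norm_eq_abs, mul_assoc] using this

lemma continuous_mdotCLM : Continuous (fun K : Mat3 => mdotCLM K) :=
  mdotCLM.continuous_of_finiteDimensional

lemma continuous_entry (i j : Fin 3) : Continuous (fun A : Mat3 => A i j) :=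
  (continuous_apply j).comp (continuous_apply i)

lemma continuous_mdot_right (J : Mat3) : Continuous (fun A : Mat3 => mdot J A) := by
  simp only [mdot_eq_sum]
  exact continuous_const.mul (continuous_finset_sum _ fun i _ =>
    continuous_finset_sum _ fun j _ => continuous_const.mul (continuous_entry i j))


lemma ae_mem_SO3 {μ : Measure Mat3} (hμ : IsHaarSO3 μ) : ∀ᵐ A ∂μ, A ∈ SO3 := by
  rw [MeasureTheory.ae_iff]
  exact hμ.2.1

lemma integrable_of_SO3_bound {μ : Measure Mat3} (hμ : IsHaarSO3 μ)
    {E : Type*} [NormedAddCommGroup E] {g : Mat3 → E}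
    (hg : AEStronglyMeasurable g μ) (C : ℝ) (hC : ∀ a ∈ SO3, ‖g a‖ ≤ C) :
    Integrable g μ := by
  haveI : IsProbabilityMeasure μ := hμ.1
  refine Integrable.mono' (integrable_const C) hg ?_
  exact (ae_mem_SO3 hμ).mono fun a ha => hC a ha





/-- Key bound for exp(mdot J a) on SO3. -/
lemma exp_mdot_le {J a : Mat3} (ha : a ∈ SO3) : Real.exp (mdot J a) ≤ Real.exp ((9/2) * ‖J‖) := by
  apply Real.exp_le_exp.mpr
  calc mdot J a ≤ |mdot J a| := le_abs_self _
    _ ≤ (9/2) * (‖J‖ * ‖a‖) := abs_mdot_le J a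
    _ ≤ (9/2) * (‖J‖ * 1) := by
        refine mul_le_mul_of_nonneg_left ?_ (by norm_num)
        exact mul_le_mul_of_nonneg_left (SO3_norm_le_one ha) (norm_nonneg _)
    _ = (9/2) * ‖J‖ := by ring

lemma integrable_exp_mdot {μ : Measure Mat3} (hμ : IsHaarSO3 μ) (J : Mat3) :
    Integrable (fun a => Real.exp (mdot J a)) μ := by
  refine integrable_of_SO3_bound hμ
    ((Real.continuous_exp.comp (continuous_mdot_right J)).aestronglyMeasurable)
    (Real.exp ((9/2) * ‖J‖)) fun a ha => ?_
  rw [Real.norm_eq_abs, abs_of_pos (Real.exp_pos _)]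
  exact exp_mdot_le ha

lemma Z_pos {μ : Measure Mat3} (hμ : IsHaarSO3 μ) (J : Mat3) : 0 < Z μ J := by
  haveI : IsProbabilityMeasure μ := hμ.1
  exact integral_exp_pos (integrable_exp_mdot hμ J)

lemma integrable_expCLM {μ : Measure Mat3} (hμ : IsHaarSO3 μ) (J : Mat3) :
    Integrable (fun a => Real.exp (mdot J a) • mdotCLM a) μ := by
  refine integrable_of_SO3_bound hμ
    (((Real.continuous_exp.comp (continuous_mdot_right J)).smul
      continuous_mdotCLM).aestronglyMeasurable)
    (Real.exp ((9/2) * ‖J‖) * (9/2)) fun a ha => ?_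
  have h2le : ‖mdotCLM a‖ ≤ 9/2 := by
    calc ‖mdotCLM a‖ ≤ (9/2) * ‖a‖ := mdotCLM_norm_le a
      _ ≤ (9/2) * 1 := mul_le_mul_of_nonneg_left (SO3_norm_le_one ha) (by norm_num)
      _ = 9/2 := by ring
  calc ‖Real.exp (mdot J a) • mdotCLM a‖
      ≤ ‖Real.exp (mdot J a)‖ * ‖mdotCLM a‖ := ContinuousLinearMap.opNorm_smul_le _ _
    _ = Real.exp (mdot J a) * ‖mdotCLM a‖ := by
        rw [Real.norm_eq_abs, abs_of_pos (Real.exp_pos _)]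
    _ ≤ Real.exp ((9/2) * ‖J‖) * (9/2) :=
        mul_le_mul (exp_mdot_le ha) h2le (norm_nonneg _) (Real.exp_pos _).le

lemma hasFDerivAt_Z {μ : Measure Mat3} (hμ : IsHaarSO3 μ) (J : Mat3) :
    HasFDerivAt (Z μ) (∫ a, Real.exp (mdot J a) • mdotCLM a ∂μ) J := by
  haveI : IsProbabilityMeasure μ := hμ.1
  have key : HasFDerivAt (fun x => ∫ a, Real.exp (mdot x a) ∂μ)
      (∫ a, Real.exp (mdot J a) • mdotCLM a ∂μ) J := by
    apply hasFDerivAt_integral_of_dominated_of_fderiv_le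
      (F' := fun x a => Real.exp (mdot x a) • mdotCLM a)
      (bound := fun _ => Real.exp ((9/2) * (‖J‖ + 1)) * (9/2))
      (s := Metric.ball J 1) (Metric.ball_mem_nhds J one_pos)
    · exact Filter.Eventually.of_forall fun x =>
        (Real.continuous_exp.comp (continuous_mdot_right x)).aestronglyMeasurable
    · exact integrable_exp_mdot hμ J
    · exact (integrable_expCLM hμ J).aestronglyMeasurable
    · refine (ae_mem_SO3 hμ).mono fun a ha x hx => ?_
      have hxn : ‖x‖ ≤ ‖J‖ + 1 := by
        have := mem_ball_iff_norm.mp hx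
        calc ‖x‖ = ‖J + (x - J)‖ := by rw [add_sub_cancel]
          _ ≤ ‖J‖ + ‖x - J‖ := norm_add_le _ _
          _ ≤ ‖J‖ + 1 := by linarith
      have h1 : Real.exp (mdot x a) ≤ Real.exp ((9/2) * (‖J‖ + 1)) := by
        refine (exp_mdot_le ha).trans (Real.exp_le_exp.mpr ?_)
        exact mul_le_mul_of_nonneg_left hxn (by norm_num)
      have h2 : ‖mdotCLM a‖ ≤ 9/2 := by
        calc ‖mdotCLM a‖ ≤ (9/2) * ‖a‖ := mdotCLM_norm_le a
          _ ≤ (9/2) * 1 := mul_le_mul_of_nonneg_left (SO3_norm_le_one ha) (by norm_num)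
          _ = 9/2 := by ring
      calc ‖Real.exp (mdot x a) • mdotCLM a‖
          ≤ ‖Real.exp (mdot x a)‖ * ‖mdotCLM a‖ := ContinuousLinearMap.opNorm_smul_le _ _
        _ = Real.exp (mdot x a) * ‖mdotCLM a‖ := by
            rw [Real.norm_eq_abs, abs_of_pos (Real.exp_pos _)]
        _ ≤ Real.exp ((9/2) * (‖J‖ + 1)) * (9/2) :=
            mul_le_mul h1 h2 (norm_nonneg _) (Real.exp_pos _).le
    · exact integrable_const _
    · refine Filter.Eventually.of_forall fun a x _ => ?_
      have hlin : HasFDerivAt (fun y : Mat3 => mdot y a) (mdotCLM a) x := by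
        have : (fun y : Mat3 => mdot y a) = fun y => mdotCLM a y := by
          funext y; simp [mdot_comm]
        rw [this]
        exact (mdotCLM a).hasFDerivAt
      exact hlin.exp
  exact key

lemma integrable_vM_entry {μ : Measure Mat3} (hμ : IsHaarSO3 μ) (J : Mat3) (i j : Fin 3) :
    Integrable (fun a => vonMises μ J a * a i j) μ := by
  refine integrable_of_SO3_bound hμ ?_ (Real.exp ((9/2) * ‖J‖) / Z μ J) fun a ha => ?_
  · exact (((Real.continuous_exp.comp (continuous_mdot_right J)).div_const _).mul
      (continuous_entry i j)).aestronglyMeasurable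
  · have hZ := Z_pos hμ J
    rw [Real.norm_eq_abs, abs_mul]
    have h1 : |vonMises μ J a| ≤ Real.exp ((9/2) * ‖J‖) / Z μ J := by
      rw [vonMises, abs_div, abs_of_pos hZ, abs_of_pos (Real.exp_pos _)]
      gcongr
      exact Real.exp_le_exp.mp (exp_mdot_le ha)
    have h2 : |a i j| ≤ 1 := by
      have := a.norm_entry_le_entrywise_sup_norm (i := i) (j := j)
      exact this.trans (SO3_norm_le_one ha)
    calc |vonMises μ J a| * |a i j| ≤ (Real.exp ((9/2) * ‖J‖) / Z μ J) * 1 :=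
          mul_le_mul h1 h2 (abs_nonneg _) (by positivity)
      _ = Real.exp ((9/2) * ‖J‖) / Z μ J := by ring

lemma mdot_Jcal {μ : Measure Mat3} (hμ : IsHaarSO3 μ) (J H : Mat3) :
    mdot (Jcal μ (vonMises μ J)) H = ∫ a, vonMises μ J a * mdot a H ∂μ := by
  rw [mdot_eq_sum]
  have step : ∀ i j : Fin 3, (Jcal μ (vonMises μ J)) i j * H i j
      = ∫ a, vonMises μ J a * a i j * H i j ∂μ := by
    intro i j
    rw [Jcal, Matrix.of_apply, ← integral_mul_const]
  have hsum : ∑ i, ∑ j, (Jcal μ (vonMises μ J)) i j * H i j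
      = ∫ a, ∑ i, ∑ j, vonMises μ J a * a i j * H i j ∂μ := by
    simp_rw [step]
    have inner : ∀ i : Fin 3, ∑ j, ∫ a, vonMises μ J a * a i j * H i j ∂μ
        = ∫ a, ∑ j, vonMises μ J a * a i j * H i j ∂μ := fun i =>
      (integral_finset_sum _ fun j _ => (integrable_vM_entry hμ J i j).mul_const (H i j)).symm
    simp_rw [inner]
    exact (integral_finset_sum _ fun i _ => integrable_finset_sum _ fun j _ =>
      (integrable_vM_entry hμ J i j).mul_const (H i j)).symm
  rw [hsum, ← MeasureTheory.integral_const_mul]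
  congr 1
  funext a
  simp only [mdot_eq_sum, Finset.mul_sum]
  refine Finset.sum_congr rfl fun i _ => Finset.sum_congr rfl fun j _ => by ring

lemma isBoundedBilinearMap_mdot :
    IsBoundedBilinearMap ℝ (fun p : Mat3 × Mat3 => mdot p.1 p.2) where
  add_left := mdot_add_left
  smul_left := fun c x y => by simp [mdot_smul_left]
  add_right := mdot_add_right
  smul_right := fun c x y => by simp [mdot_smul_right]
  bound := ⟨9/2, by norm_num, fun x y => by
    simpa [Real.norm_eq_abs, mul_assoc] using abs_mdot_le x y⟩

lemma hasFDerivAt_V {μ : Measure Mat3} (hμ : IsHaarSO3 μ) (ρ : ℝ) (J : Mat3) :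
    HasFDerivAt (V μ ρ) (mdotCLM (J - ρ • Jcal μ (vonMises μ J))) J := by
  have hB := isBoundedBilinearMap_mdot
  have hdiag : HasFDerivAt (fun J : Mat3 => (J, J))
      ((ContinuousLinearMap.id ℝ Mat3).prod (ContinuousLinearMap.id ℝ Mat3)) J :=
    HasFDerivAt.prodMk (hasFDerivAt_id J) (hasFDerivAt_id J)
  have hq : HasFDerivAt (fun J : Mat3 => mdot J J)
      ((hB.deriv (J, J)).comp
        ((ContinuousLinearMap.id ℝ Mat3).prod (ContinuousLinearMap.id ℝ Mat3))) J :=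
    HasFDerivAt.comp (f := fun K : Mat3 => (K, K)) J (hB.hasFDerivAt (J, J)) hdiag
  have h1 := hq.const_mul (1/2 : ℝ)
  have hZ := hasFDerivAt_Z hμ J
  have hlog := hZ.log (Z_pos hμ J).ne'
  have hV := h1.sub (hlog.const_mul ρ)
  have heq : ((1:ℝ)/2) • ((hB.deriv (J, J)).comp
        ((ContinuousLinearMap.id ℝ Mat3).prod (ContinuousLinearMap.id ℝ Mat3)))
      - ρ • ((Z μ J)⁻¹ • ∫ a, Real.exp (mdot J a) • mdotCLM a ∂μ)
      = mdotCLM (J - ρ • Jcal μ (vonMises μ J)) := by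
    ext H
    have happ : (∫ a, Real.exp (mdot J a) • mdotCLM a ∂μ) H
        = ∫ a, Real.exp (mdot J a) * mdot a H ∂μ := by
      rw [ContinuousLinearMap.integral_apply (integrable_expCLM hμ J)]
      simp
    have hJc : mdot (Jcal μ (vonMises μ J)) H
        = (Z μ J)⁻¹ * ∫ a, Real.exp (mdot J a) * mdot a H ∂μ := by
      rw [mdot_Jcal hμ J H, ← MeasureTheory.integral_const_mul]
      congr 1
      funext a
      rw [vonMises]
      ring
    simp only [ContinuousLinearMap.coe_sub', Pi.sub_apply, ContinuousLinearMap.coe_smul',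
      Pi.smul_apply, ContinuousLinearMap.smul_apply, ContinuousLinearMap.comp_apply,
      ContinuousLinearMap.prod_apply, ContinuousLinearMap.id_apply,
      hB.deriv_apply, smul_eq_mul, mdotCLM_apply, happ]
    rw [mdot_sub_left, mdot_smul_left, hJc]
    rw [mdot_comm H J]
    ring
  rw [← heq]
  exact hV

end

/-- `V` is differentiable, with derivative `DV(J)(H) = (J − ρ 𝒥[M_J]) · H`, i.e. with
gradient `∇V(J) = J − ρ 𝒥[M_J]` for the inner product `A·B = ½Tr(ABᵀ)`. -/
theorem V_differentiable_gradient (μ : Measure Mat3) (hμ : IsHaarSO3 μ)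
    (ρ : ℝ) (hρ : 0 < ρ) :
    Differentiable ℝ (V μ ρ) ∧
    ∀ J H : Mat3, fderiv ℝ (V μ ρ) J H = mdot (J - ρ • Jcal μ (vonMises μ J)) H := by
  constructor
  · exact fun J => (hasFDerivAt_V hμ ρ J).differentiableAt
  · intro J H
    rw [show fderiv ℝ (V μ ρ) J = mdotCLM (J - ρ • Jcal μ (vonMises μ J)) from
      (hasFDerivAt_V hμ ρ J).fderiv]
    rfl
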